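/- Pointwise characterization of extend: for every function f : Zipper α → β and every zipper z : Zipper α of total length n, toList (extend f z) = (List.range n).map (fun i => f (focusAt z i)); that is, the i-th element of the extended zipper's underlying list is f applied to the zipper refocused at position i. -/

import Mathlib

/-- A list zipper: a focused element with left context (stored reversed,
nearest neighbor first) and right context. -/
structure Zipper (α : Type*) where
  left : List α
  focus : α
  right : List α

namespace Zipper

variable {α β γ δ : Type*}

/-- Extract the focused element. -/
def extract (z : Zipper α) : α := z.focus

/-- Move the focus one step to the left (identity if the left context is empty). -/
def moveLeft : Zipper α → Zipper α
  | ⟨a :: l, c, r⟩ => ⟨l, a, c :: r⟩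
  | z => z

/-- Move the focus one step to the right (identity if the right context is empty). -/
def moveRight : Zipper α → Zipper α
  | ⟨l, c, b :: r⟩ => ⟨c :: l, b, r⟩
  | z => z

/-- Auxiliary: successive left shifts, structurally on the left context. -/
def leftsAux : List α → α → List α → List (Zipper α)
  | [], _, _ => []
  | a :: l, c, r => ⟨l, a, c :: r⟩ :: leftsAux l a (c :: r)

/-- The list [moveLeft z, moveLeft (moveLeft z), …] of successive left shifts. -/
def lefts (z : Zipper α) : List (Zipper α) := leftsAux z.left z.focus z.right

/-- Auxiliary: successive right shifts, structurally on the right context. -/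
def rightsAux : List α → α → List α → List (Zipper α)
  | _, _, [] => []
  | l, c, b :: r => ⟨c :: l, b, r⟩ :: rightsAux (c :: l) b r

/-- The list [moveRight z, moveRight (moveRight z), …] of successive right shifts. -/
def rights (z : Zipper α) : List (Zipper α) := rightsAux z.left z.focus z.right

/-- CoKleisli extension: apply the local rule `f` at every position. -/
def extend (f : Zipper α → β) (z : Zipper α) : Zipper β :=
  ⟨(lefts z).map f, f z, (rights z).map f⟩

/-- The underlying list of a zipper. -/
def toList (z : Zipper α) : List α := z.left.reverse ++ [z.focus] ++ z.right

/-- The zipper refocused at position `i` (intended for `i < (toList z).length`). -/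
def focusAt (z : Zipper α) (i : ℕ) : Zipper α :=
  ⟨((toList z).take i).reverse, (toList z).getD i z.focus, (toList z).drop (i + 1)⟩

end Zipper

theorem focusAt_congr {α : Type*} {z z' : Zipper α} (h : z.toList = z'.toList)
    {i : ℕ} (hi : i < z.toList.length) :
    z.focusAt i = z'.focusAt i := by
  unfold Zipper.focusAt
  rw [h] at hi ⊢
  rw [List.getD_eq_getElem _ _ hi, List.getD_eq_getElem _ _ hi]

theorem toList_len {α : Type*} (l : List α) (c : α) (r : List α) :
    (Zipper.toList ⟨l, c, r⟩).length = l.length + 1 + r.length := by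
  simp [Zipper.toList]; omega

theorem focusAt_mid {α : Type*} (l : List α) (c : α) (r : List α) :
    Zipper.focusAt ⟨l, c, r⟩ l.length = ⟨l, c, r⟩ := by
  have key : Zipper.toList ⟨l, c, r⟩ = (l.reverse ++ [c]) ++ r := by
    simp [Zipper.toList]
  unfold Zipper.focusAt
  rw [key]
  have h1 : ((l.reverse ++ [c]) ++ r).take l.length = l.reverse := by
    rw [List.take_append_of_le_length (by simp),
        List.take_append_of_le_length (by simp), List.take_of_length_le (by simp)]
  have h2 : ((l.reverse ++ [c]) ++ r).getD l.length c = c := by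
    rw [List.getD_eq_getElem _ _ (by simp),
        List.getElem_append_left (by simp),
        List.getElem_append_right (by simp)]
    simp
  have h3 : ((l.reverse ++ [c]) ++ r).drop (l.length + 1) = r := by
    rw [show l.length + 1 = (l.reverse ++ [c]).length by simp]
    exact List.drop_left
  rw [h1, h2, h3, List.reverse_reverse]

theorem lefts_lemma {α β : Type*} (f : Zipper α → β) :
    ∀ (l : List α) (c : α) (r : List α),
      ((Zipper.leftsAux l c r).map f).reverse =
        (List.range l.length).map (fun i => f (Zipper.focusAt ⟨l, c, r⟩ i)) := by
  intro l
  induction l with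
  | nil => intro c r; simp [Zipper.leftsAux]
  | cons a l ih =>
    intro c r
    rw [Zipper.leftsAux]
    simp only [List.map_cons, List.reverse_cons, List.length_cons, List.range_succ,
      List.map_append, List.map_cons, List.map_nil]
    rw [ih a (c :: r)]
    have htl : (Zipper.toList ⟨l, a, c :: r⟩) = Zipper.toList ⟨a :: l, c, r⟩ := by
      simp [Zipper.toList]
    congr 1
    · apply List.map_congr_left
      intro i hi
      rw [List.mem_range] at hi
      congr 1
      exact focusAt_congr htl (by rw [toList_len]; omega)
    · have : Zipper.focusAt ⟨a :: l, c, r⟩ l.length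
          = Zipper.focusAt ⟨l, a, c :: r⟩ l.length :=
        (focusAt_congr htl (by rw [toList_len]; omega)).symm
      rw [this, focusAt_mid]

theorem rights_lemma {α β : Type*} (f : Zipper α → β) :
    ∀ (r : List α) (l : List α) (c : α),
      (Zipper.rightsAux l c r).map f =
        (List.range r.length).map (fun i => f (Zipper.focusAt ⟨l, c, r⟩ (l.length + 1 + i))) := by
  intro r
  induction r with
  | nil => intro l c; simp [Zipper.rightsAux]
  | cons b r ih =>
    intro l c
    rw [Zipper.rightsAux]
    simp only [List.map_cons, List.length_cons, List.range_succ_eq_map,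
      List.map_cons, List.map_map]
    have htl : (Zipper.toList ⟨c :: l, b, r⟩) = Zipper.toList ⟨l, c, b :: r⟩ := by
      simp [Zipper.toList]
    congr 1
    case _ =>
      have : Zipper.focusAt ⟨l, c, b :: r⟩ (l.length + 1 + 0)
          = Zipper.focusAt ⟨c :: l, b, r⟩ ((c :: l).length) := by
        rw [← focusAt_congr htl (by rw [toList_len]; simp; omega)]
        simp
      rw [this, focusAt_mid]
    case _ =>
      rw [ih (c :: l) b]
      apply List.map_congr_left
      intro i hi
      rw [List.mem_range] at hi
      simp only [Function.comp]
      congr 1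
      have := focusAt_congr htl (i := (c :: l).length + 1 + i)
        (by rw [toList_len]; simp; omega)
      rw [this]
      congr 1
      simp; omega


/-- Pointwise characterization of extend: the i-th element of the extended
zipper's underlying list is f applied to the zipper refocused at position i. -/
theorem extend_toList_eq_map_focusAt {α β : Type*} (f : Zipper α → β) (z : Zipper α) :
    Zipper.toList (Zipper.extend f z) =
      (List.range (Zipper.toList z).length).map (fun i => f (Zipper.focusAt z i)) := by
  obtain ⟨l, c, r⟩ := z
  rw [toList_len, List.range_add, List.range_succ, List.map_append, List.map_append,
    List.map_map, List.map_singleton]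
  show Zipper.toList (Zipper.extend f ⟨l, c, r⟩) = _
  unfold Zipper.extend Zipper.toList Zipper.lefts Zipper.rights
  simp only
  rw [lefts_lemma f l c r, rights_lemma f r l c, focusAt_mid, List.append_assoc]
  simp [Function.comp]
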